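/- Let τ ∈ ℝ, let V_A > 0, V_B > 0 and m_B ∈ ℝ. If p_ε(0, V_A) = τ and p_ε(m_B, V_B) ≥ τ, then V_A ≤ V_B; moreover, V_A = V_B holds if and only if m_B = 0 and p_ε(m_B, V_B) = τ. (This is Theorem 1 of the paper: a point on the estimated decision boundary, where the predictive mean is 0, lying on the isocontour p_ε = τ minimizes the predictive variance among all points with p_ε ≥ τ.) -/

import Mathlib

/-- The cumulative distribution function of the standard Gaussian distribution `N(0,1)`. -/
noncomputable def stdGaussianCDF : ℝ → ℝ :=
  fun x => ProbabilityTheory.cdf (ProbabilityTheory.gaussianReal 0 1) x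

/-- The `ε`-margin probability of a point with predictive mean `m` and predictive
variance `V`: `p_ε(m, V) = Φ(-(|m| + ε)/√V)`. -/
noncomputable def epsMarginProb (ε m V : ℝ) : ℝ :=
  stdGaussianCDF (-(|m| + ε) / Real.sqrt V)

open ProbabilityTheory MeasureTheory in
lemma stdGaussianCDF_strictMono : StrictMono stdGaussianCDF := by
  intro a b hab
  have hone : (1 : NNReal) ≠ 0 := one_ne_zero
  have h1 : stdGaussianCDF a = ((gaussianReal 0 1) (Set.Iic a)).toReal := cdf_eq_real _ _
  have h2 : stdGaussianCDF b = ((gaussianReal 0 1) (Set.Iic b)).toReal := cdf_eq_real _ _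
  rw [h1, h2]
  have hIoc : 0 < (gaussianReal 0 1) (Set.Ioc a b) := by
    rw [gaussianReal_apply_eq_integral 0 hone, ENNReal.ofReal_pos,
      ← intervalIntegral.integral_of_le hab.le]
    exact intervalIntegral.intervalIntegral_pos_of_pos_on
      ((integrable_gaussianPDFReal 0 1).intervalIntegrable)
      (fun x _ => gaussianPDFReal_pos 0 1 x hone) hab
  have hlt : (gaussianReal 0 1) (Set.Iic a) < (gaussianReal 0 1) (Set.Iic b) := by
    have hsplit : (gaussianReal 0 1) (Set.Iic b)
        = (gaussianReal 0 1) (Set.Iic a) + (gaussianReal 0 1) (Set.Ioc a b) := by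
      rw [← measure_union (Set.Iic_disjoint_Ioc le_rfl) measurableSet_Ioc,
        Set.Iic_union_Ioc_eq_Iic hab.le]
    rw [hsplit]
    exact ENNReal.lt_add_right (measure_ne_top _ _) hIoc.ne'
  exact (ENNReal.toReal_lt_toReal (measure_ne_top _ _) (measure_ne_top _ _)).2 hlt

lemma stdGaussianCDF_le_iff {a b : ℝ} : stdGaussianCDF a ≤ stdGaussianCDF b ↔ a ≤ b :=
  stdGaussianCDF_strictMono.le_iff_le

/-- Theorem 1 of the paper: a point on the estimated decision boundary (predictive mean `0`)
lying on the isocontour `p_ε = τ` minimizes the predictive variance among all points with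
`p_ε ≥ τ`. -/
theorem exploitation_optimum_minimizes_variance
    (ε τ VA VB mB : ℝ) (hε : 0 < ε) (hVA : 0 < VA) (hVB : 0 < VB)
    (hA : epsMarginProb ε 0 VA = τ) (hB : τ ≤ epsMarginProb ε mB VB) :
    VA ≤ VB ∧ (VA = VB ↔ (mB = 0 ∧ epsMarginProb ε mB VB = τ)) := by
  have hsA : 0 < Real.sqrt VA := Real.sqrt_pos.2 hVA
  have hsB : 0 < Real.sqrt VB := Real.sqrt_pos.2 hVB
  -- key inequality on the arguments of Φ
  have hkey : -ε / Real.sqrt VA ≤ -(|mB| + ε) / Real.sqrt VB := by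
    have h0 : epsMarginProb ε 0 VA = stdGaussianCDF (-ε / Real.sqrt VA) := by
      simp [epsMarginProb]
    have : stdGaussianCDF (-ε / Real.sqrt VA)
        ≤ stdGaussianCDF (-(|mB| + ε) / Real.sqrt VB) := by rw [← h0, hA]; exact hB
    exact stdGaussianCDF_le_iff.1 this
  have hfrac : (|mB| + ε) / Real.sqrt VB ≤ ε / Real.sqrt VA := by
    have := neg_le_neg hkey
    rw [neg_div, neg_div, neg_neg, neg_neg] at this
    linarith
  have hεfrac : ε / Real.sqrt VB ≤ ε / Real.sqrt VA := by
    have h1 : ε / Real.sqrt VB ≤ (|mB| + ε) / Real.sqrt VB := by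
      apply div_le_div_of_nonneg_right ?_ hsB.le
      · have := abs_nonneg mB; linarith
    linarith
  have hsAB : Real.sqrt VA ≤ Real.sqrt VB := by
    have := (div_le_div_iff₀ hsB hsA).1 hεfrac
    nlinarith
  have hVAB : VA ≤ VB := by
    nlinarith [Real.sq_sqrt hVA.le, Real.sq_sqrt hVB.le, Real.sqrt_nonneg VA, hsAB]
  refine ⟨hVAB, ?_, ?_⟩
  · intro hEq
    subst hEq
    have hm : |mB| ≤ 0 := by
      have := (div_le_div_iff_of_pos_right hsA).1 hfrac
      linarith
    have hmB : mB = 0 := abs_eq_zero.1 (le_antisymm hm (abs_nonneg mB))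
    refine ⟨hmB, ?_⟩
    rw [← hA]
    simp [epsMarginProb, hmB]
  · rintro ⟨hmB, hp⟩
    have h1 : stdGaussianCDF (-ε / Real.sqrt VB) = stdGaussianCDF (-ε / Real.sqrt VA) := by
      have hb : epsMarginProb ε mB VB = stdGaussianCDF (-ε / Real.sqrt VB) := by
        simp [epsMarginProb, hmB]
      have ha : epsMarginProb ε 0 VA = stdGaussianCDF (-ε / Real.sqrt VA) := by
        simp [epsMarginProb]
      rw [← hb, ← ha, hp, hA]
    have h2 : -ε / Real.sqrt VB = -ε / Real.sqrt VA := stdGaussianCDF_strictMono.injective h1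
    have h3 : Real.sqrt VB = Real.sqrt VA := by
      field_simp at h2
      linarith
    nlinarith [Real.sq_sqrt hVA.le, Real.sq_sqrt hVB.le, h3]
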